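/- Assume the σ-ideal I is c.c.c. Let 𝒜 ⊆ I be a point-finite family such that ⋃𝒜 ∉ I and such that the algebra P(𝒜)/ℐ is not c.c.c., where ℐ is the ideal of subfamilies of 𝒜 induced by I. Then there exist subfamilies {𝒜_α : α < ω₁} of 𝒜 and a Borel set H such that: (1) ⋃𝒜_α ∉ I for every α < ω₁; (2) 𝒜_α ∩ 𝒜_β = ∅ for all α < β < ω₁; (3) H is an I-hull of ⋃𝒜_α for every α < ω₁ (so all the unions have equal I-hulls). -/

import Mathlib

open MeasureTheory Set Pointwise

/-- `B` is a Borel subset of `X`. -/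
def IsBorel {X : Type} [TopologicalSpace X] (B : Set X) : Prop :=
  MeasurableSet[borel X] B

/-- `I` is a σ-ideal of subsets of `X` (closed under subsets and countable unions),
containing all singletons, with a Borel base. -/
def IsNiceIdeal {X : Type} [TopologicalSpace X] (I : Set (Set X)) : Prop :=
  (∀ A B : Set X, A ⊆ B → B ∈ I → A ∈ I) ∧
  (∀ f : ℕ → Set X, (∀ n, f n ∈ I) → (⋃ n, f n) ∈ I) ∧
  (∀ x : X, ({x} : Set X) ∈ I) ∧
  (∀ A ∈ I, ∃ B ∈ I, IsBorel B ∧ A ⊆ B)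

/-- `I` is c.c.c.: every family of Borel sets not in `I` whose pairwise intersections
(between distinct members) lie in `I` is at most countable. -/
def IdealCCC {X : Type} [TopologicalSpace X] (I : Set (Set X)) : Prop :=
  ∀ 𝒜 : Set (Set X), (∀ A ∈ 𝒜, IsBorel A ∧ A ∉ I) →
    (∀ A ∈ 𝒜, ∀ B ∈ 𝒜, A ≠ B → A ∩ B ∈ I) → 𝒜.Countable

/-- A family of sets is point-finite iff each point belongs to only finitely many members. -/
def PointFiniteFam {X : Type} (𝒜 : Set (Set X)) : Prop :=
  ∀ x : X, {A ∈ 𝒜 | x ∈ A}.Finite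

/-- A Borel set `H` is an `I`-hull of `D`. -/
def IsHull {X : Type} [TopologicalSpace X] (I : Set (Set X)) (H D : Set X) : Prop :=
  IsBorel H ∧ D \ H ∈ I ∧ ∀ C : Set X, IsBorel C → D \ C ∈ I → H \ C ∈ I

/-- The algebra `P(𝒜)/ℐ` is c.c.c., where `𝒳 ∈ ℐ ↔ ⋃𝒳 ∈ I`: every family `W` of
subfamilies of `𝒜` with `⋃a ∉ I` for `a ∈ W` and `⋃(a ∩ b) ∈ I` for distinct
`a, b ∈ W` is at most countable. -/
def AlgCCC {X : Type} [TopologicalSpace X] (I : Set (Set X)) (𝒜 : Set (Set X)) : Prop :=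
  ∀ W : Set (Set (Set X)), (∀ a ∈ W, a ⊆ 𝒜) → (∀ a ∈ W, ⋃₀ a ∉ I) →
    (∀ a ∈ W, ∀ b ∈ W, a ≠ b → ⋃₀ (a ∩ b) ∈ I) → W.Countable

/-- An index set of size `ω₁` (the first uncountable cardinal). -/
def Omega1 : Type := Quotient.out (Cardinal.aleph 1 : Cardinal.{0})

namespace OtoczkaAux

variable {X : Type} [TopologicalSpace X] {I : Set (Set X)}

lemma mono (hI : IsNiceIdeal I) {A B : Set X} (h : A ⊆ B) (hB : B ∈ I) : A ∈ I :=
  hI.1 A B h hB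

lemma empty_mem [Nonempty X] (hI : IsNiceIdeal I) : (∅ : Set X) ∈ I :=
  mono hI (empty_subset _) (hI.2.2.1 (Classical.arbitrary X))

lemma union_mem [Nonempty X] (hI : IsNiceIdeal I) {A B : Set X}
    (hA : A ∈ I) (hB : B ∈ I) : A ∪ B ∈ I := by
  have h : (⋃ n : ℕ, (if n = 0 then A else B)) ∈ I := by
    refine hI.2.1 _ fun n => ?_
    by_cases h : n = 0 <;> simp [h, hA, hB]
  refine mono hI ?_ h
  refine union_subset ?_ ?_
  · exact subset_iUnion_of_subset 0 (by simp)
  · exact subset_iUnion_of_subset 1 (by simp)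

lemma biUnion_mem [Nonempty X] (hI : IsNiceIdeal I) {ι : Type*} {s : Set ι}
    (hs : s.Countable) {f : ι → Set X} (h : ∀ i ∈ s, f i ∈ I) :
    (⋃ i ∈ s, f i) ∈ I := by
  rcases s.eq_empty_or_nonempty with rfl | hne
  · simpa using empty_mem hI
  · obtain ⟨g, hg⟩ := hs.exists_eq_range hne
    rw [hg, biUnion_range]
    exact hI.2.1 _ fun n => h _ (by rw [hg]; exact mem_range_self n)

lemma isBorel_biUnion {ι : Type*} {s : Set ι} (hs : s.Countable) {f : ι → Set X}
    (h : ∀ i ∈ s, IsBorel (f i)) : IsBorel (⋃ i ∈ s, f i) := by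
  letI : MeasurableSpace X := borel X
  exact MeasurableSet.biUnion hs h

lemma isBorel_diff {A B : Set X} (hA : IsBorel A) (hB : IsBorel B) : IsBorel (A \ B) := by
  letI : MeasurableSpace X := borel X
  exact MeasurableSet.diff hA hB

lemma isBorel_compl {A : Set X} (hA : IsBorel A) : IsBorel Aᶜ := by
  letI : MeasurableSpace X := borel X
  exact MeasurableSet.compl hA

lemma isBorel_empty : IsBorel (∅ : Set X) := by
  letI : MeasurableSpace X := borel X
  exact MeasurableSet.empty

lemma hull_pos [Nonempty X] (hI : IsNiceIdeal I) {H D : Set X}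
    (hH : IsHull I H D) (hD : D ∉ I) : H ∉ I := fun hHI =>
  hD (mono hI (subset_diff_union D H) (union_mem hI hH.2.1 hHI))

lemma hull_congr [Nonempty X] (hI : IsNiceIdeal I) {H H' D : Set X}
    (hH : IsHull I H D) (hB : IsBorel H') (h1 : H \ H' ∈ I) (h2 : H' \ H ∈ I) :
    IsHull I H' D := by
  refine ⟨hB, ?_, ?_⟩
  · refine mono hI ?_ (union_mem hI hH.2.1 h1)
    rintro x ⟨hxD, hxH'⟩
    by_cases h : x ∈ H
    exacts [Or.inr ⟨h, hxH'⟩, Or.inl ⟨hxD, h⟩]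
  · intro C hC hDC
    have h3 := hH.2.2 C hC hDC
    refine mono hI ?_ (union_mem hI h2 h3)
    rintro x ⟨hx1, hx2⟩
    by_cases h : x ∈ H
    exacts [Or.inr ⟨h, hx2⟩, Or.inl ⟨hx1, h⟩]

lemma hull_biUnion [Nonempty X] (hI : IsNiceIdeal I) {ι : Type*} {s : Set ι}
    (hs : s.Countable) {Hf Df : ι → Set X} (h : ∀ i ∈ s, IsHull I (Hf i) (Df i)) :
    IsHull I (⋃ i ∈ s, Hf i) (⋃ i ∈ s, Df i) := by
  refine ⟨isBorel_biUnion hs fun i hi => (h i hi).1, ?_, ?_⟩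
  · refine mono hI ?_ (biUnion_mem hI hs (f := fun i => Df i \ Hf i)
      (fun i hi => (h i hi).2.1))
    rintro x ⟨hx1, hx2⟩
    simp only [mem_iUnion] at hx1 ⊢
    obtain ⟨i, hi, hxi⟩ := hx1
    exact ⟨i, hi, hxi, fun hxH => hx2 (mem_biUnion hi hxH)⟩
  · intro C hC hDC
    have hH : ∀ i ∈ s, Hf i \ C ∈ I := fun i hi =>
      (h i hi).2.2 C hC (mono hI (diff_subset_diff_left (subset_biUnion_of_mem hi)) hDC)
    refine mono hI ?_ (biUnion_mem hI hs (f := fun i => Hf i \ C) hH)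
    rintro x ⟨hx1, hx2⟩
    simp only [mem_iUnion] at hx1 ⊢
    obtain ⟨i, hi, hxi⟩ := hx1
    exact ⟨i, hi, hxi, hx2⟩

lemma hull_exists [Nonempty X] (hI : IsNiceIdeal I) (hccc : IdealCCC I) (D : Set X) :
    ∃ H, IsHull I H D := by
  classical
  set P : Set (Set X) := {B | IsBorel B ∧ B ∉ I ∧ D ∩ B ∈ I} with hP
  set S : Set (Set (Set X)) := {m | m ⊆ P ∧ ∀ A ∈ m, ∀ B ∈ m, A ≠ B → A ∩ B ∈ I} with hS
  have hzorn : ∀ c ⊆ S, IsChain (· ⊆ ·) c → ∃ ub ∈ S, ∀ s ∈ c, s ⊆ ub := by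
    intro c hc hchain
    refine ⟨⋃₀ c, ⟨?_, ?_⟩, fun s hs => subset_sUnion_of_mem hs⟩
    · rintro A ⟨m, hm, hAm⟩; exact (hc hm).1 hAm
    · rintro A ⟨m, hm, hAm⟩ B ⟨m', hm', hBm'⟩ hne
      rcases hchain.total hm hm' with h | h
      · exact (hc hm').2 A (h hAm) B hBm' hne
      · exact (hc hm).2 A hAm B (h hBm') hne
  obtain ⟨M, hM⟩ := zorn_subset S hzorn
  have hMsub : M ⊆ P := hM.1.1
  have hMcnt : M.Countable := hccc M (fun A hA => ⟨(hMsub hA).1, (hMsub hA).2.1⟩) hM.1.2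
  have hEB : IsBorel (⋃ B ∈ M, B) := isBorel_biUnion hMcnt fun B hB => (hMsub hB).1
  refine ⟨(⋃ B ∈ M, B)ᶜ, isBorel_compl hEB, ?_, ?_⟩
  · refine mono hI ?_ (biUnion_mem hI hMcnt (f := fun B => D ∩ B)
      (fun B hB => (hMsub hB).2.2))
    rintro x ⟨hxD, hxE⟩
    simp only [mem_compl_iff, not_not] at hxE
    simp only [mem_iUnion] at hxE ⊢
    obtain ⟨B, hB, hxB⟩ := hxE
    exact ⟨B, hB, hxD, hxB⟩
  · intro C hC hDC
    by_contra hpos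
    set B0 : Set X := (⋃ B ∈ M, B)ᶜ \ C with hB0
    have hB0P : B0 ∈ P := by
      refine ⟨isBorel_diff (isBorel_compl hEB) hC, hpos, ?_⟩
      refine mono hI ?_ hDC
      rintro x ⟨hx1, _, hx3⟩
      exact ⟨hx1, hx3⟩
    have hB0ne : B0.Nonempty :=
      nonempty_iff_ne_empty.2 (fun h => hpos (h ▸ empty_mem hI))
    have hB0nM : B0 ∉ M := by
      intro hmem
      obtain ⟨x, hx⟩ := hB0ne
      exact hx.1 (subset_biUnion_of_mem (u := fun B => B) hmem hx)
    have hdisj : ∀ A ∈ M, A ∩ B0 ∈ I := by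
      intro A hA
      refine mono hI ?_ (empty_mem hI)
      rintro x ⟨hx1, hx2, _⟩
      exact absurd (subset_biUnion_of_mem (u := fun B => B) hA hx1) hx2
    have hins : insert B0 M ∈ S := by
      constructor
      · exact insert_subset hB0P hMsub
      · intro A hA B hB hne
        rcases hA with rfl | hA <;> rcases hB with rfl | hB
        · exact absurd rfl hne
        · exact mono hI (inter_comm B0 B).subset (hdisj B hB)
        · exact hdisj A hA
        · exact hM.1.2 A hA B hB hne
    exact hB0nM (hM.2 hins (subset_insert _ _) (mem_insert _ _))

lemma saturated [Nonempty X] (hI : IsNiceIdeal I) (hccc : IdealCCC I) {ι : Type*}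
    (S0 : Set ι) (Hd : ι → Set X) (hB : ∀ β ∈ S0, IsBorel (Hd β))
    (hpos : ∀ β ∈ S0, Hd β ∉ I) :
    ∃ T, T ⊆ S0 ∧ T.Countable ∧ ∀ β ∈ S0, Hd β \ (⋃ δ ∈ T, Hd δ) ∈ I := by
  classical
  set P : Set (Set X) := {B | IsBorel B ∧ B ∉ I ∧ ∃ β ∈ S0, B ⊆ Hd β} with hP
  set S : Set (Set (Set X)) := {m | m ⊆ P ∧ ∀ A ∈ m, ∀ B ∈ m, A ≠ B → A ∩ B ∈ I} with hS
  have hzorn : ∀ c ⊆ S, IsChain (· ⊆ ·) c → ∃ ub ∈ S, ∀ s ∈ c, s ⊆ ub := by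
    intro c hc hchain
    refine ⟨⋃₀ c, ⟨?_, ?_⟩, fun s hs => subset_sUnion_of_mem hs⟩
    · rintro A ⟨m, hm, hAm⟩; exact (hc hm).1 hAm
    · rintro A ⟨m, hm, hAm⟩ B ⟨m', hm', hBm'⟩ hne
      rcases hchain.total hm hm' with h | h
      · exact (hc hm').2 A (h hAm) B hBm' hne
      · exact (hc hm).2 A hAm B (h hBm') hne
  obtain ⟨M, hM⟩ := zorn_subset S hzorn
  have hMsub : M ⊆ P := hM.1.1
  have hMcnt : M.Countable := hccc M (fun A hA => ⟨(hMsub hA).1, (hMsub hA).2.1⟩) hM.1.2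
  haveI : Countable ↥M := hMcnt.to_subtype
  have hw : ∀ B : ↥M, ∃ β ∈ S0, (B : Set X) ⊆ Hd β := fun B => (hMsub B.2).2.2
  choose w hw1 hw2 using hw
  refine ⟨range w, range_subset_iff.2 hw1, countable_range w, ?_⟩
  intro β hβ
  by_contra hpos'
  set U : Set X := ⋃ δ ∈ range w, Hd δ with hU
  have hUB : IsBorel U :=
    isBorel_biUnion (countable_range w) (fun δ hδ => hB δ (range_subset_iff.2 hw1 hδ))
  set B0 : Set X := Hd β \ U with hB0
  have hB0P : B0 ∈ P := ⟨isBorel_diff (hB β hβ) hUB, hpos', β, hβ, diff_subset⟩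
  have hB0ne : B0.Nonempty :=
    nonempty_iff_ne_empty.2 (fun h => hpos' (h ▸ empty_mem hI))
  have hsubU : ∀ A ∈ M, A ⊆ U := by
    intro A hA
    refine (hw2 ⟨A, hA⟩).trans ?_
    exact subset_biUnion_of_mem (u := fun δ => Hd δ) (mem_range_self _)
  have hB0nM : B0 ∉ M := by
    intro hmem
    obtain ⟨x, hx⟩ := hB0ne
    exact hx.2 (hsubU _ hmem hx)
  have hdisj : ∀ A ∈ M, A ∩ B0 ∈ I := by
    intro A hA
    refine mono hI ?_ (empty_mem hI)
    rintro x ⟨hx1, _, hx3⟩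
    exact absurd (hsubU A hA hx1) hx3
  have hins : insert B0 M ∈ S := by
    constructor
    · exact insert_subset hB0P hMsub
    · intro A hA B hB' hne
      rcases hA with rfl | hA <;> rcases hB' with rfl | hB'
      · exact absurd rfl hne
      · exact mono hI (inter_comm B0 B).subset (hdisj B hB')
      · exact hdisj A hA
      · exact hM.1.2 A hA B hB' hne
  exact hB0nM (hM.2 hins (subset_insert _ _) (mem_insert _ _))

/-- The canonical well-order of type `ω₁`. -/
abbrev W1 : Type := (Cardinal.aleph 1).ord.ToType

lemma W1_mk : Cardinal.mk W1 = Cardinal.aleph 1 := Cardinal.mk_ord_toType _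

lemma W1_uncountable : ¬ (univ : Set W1).Countable := by
  rw [Cardinal.countable_iff_lt_aleph_one, Cardinal.mk_univ, W1_mk]
  exact lt_irrefl _

lemma Iio_cnt (x : W1) : (Iio x).Countable :=
  (Cardinal.countable_iff_lt_aleph_one _).2 (Cardinal.mk_Iio_ord_toType x)

lemma Iic_cnt (x : W1) : (Iic x).Countable := by
  rw [← Iio_union_right]
  exact (Iio_cnt x).union (countable_singleton x)

lemma exists_ub {s : Set W1} (hs : s.Countable) : ∃ b, ∀ x ∈ s, x < b := by
  by_contra h
  push_neg at h
  have hsub : (univ : Set W1) ⊆ ⋃ x ∈ s, Iic x := by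
    intro b _
    obtain ⟨x, hx, hbx⟩ := h b
    exact mem_biUnion hx hbx
  exact W1_uncountable (Countable.mono hsub (hs.biUnion fun x _ => Iic_cnt x))

lemma exists_lub {s : Set W1} (hs : s.Countable) :
    ∃ b, (∀ x ∈ s, x < b) ∧ ∀ c, (∀ x ∈ s, x < c) → b ≤ c := by
  have hW : WellFounded ((· < ·) : W1 → W1 → Prop) := wellFounded_lt
  have hne : {b : W1 | ∀ x ∈ s, x < b}.Nonempty := exists_ub hs
  exact ⟨hW.min _ hne, hW.min_mem _ hne, fun c hc => not_lt.1 (hW.not_lt_min {b : W1 | ∀ x ∈ s, x < b} (x := c) hc)⟩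

lemma sparse (f : W1 → W1) :
    ∃ Z : Set W1, ¬ Z.Countable ∧ ∀ ξ ∈ Z, ∀ η ∈ Z, ξ < η → f ξ < η := by
  classical
  set C : Set W1 := {η | ∀ ζ, ζ < η → f ζ < η} with hC
  have key : ∀ ξ : W1, ∃ η ∈ C, ξ < η := by
    intro ξ
    have hMex : ∀ γ : W1, ∃ b, γ < b ∧ ∀ ζ ≤ γ, f ζ < b := by
      intro γ
      obtain ⟨b, hb1, -⟩ := exists_lub (s := insert γ (f '' Iic γ))
        (((Iic_cnt γ).image f).insert γ)
      exact ⟨b, hb1 γ (mem_insert _ _),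
        fun ζ hζ => hb1 _ (mem_insert_of_mem _ (mem_image_of_mem f hζ))⟩
    choose M hM1 hM2 using hMex
    set x : ℕ → W1 := fun n => M^[n] ξ with hx
    obtain ⟨η, hη1, hη2⟩ := exists_lub (s := range x) (countable_range x)
    refine ⟨η, ?_, hη1 _ ⟨0, rfl⟩⟩
    intro ζ hζ
    have hnb : ¬ ∀ y ∈ range x, y < ζ := fun h => absurd (hη2 ζ h) (not_le.2 hζ)
    push_neg at hnb
    obtain ⟨y, ⟨n, rfl⟩, hy⟩ := hnb
    have h1 : f ζ < M (x n) := hM2 (x n) ζ (not_lt.1 (by simpa using hy))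
    have h2 : M (x n) < η := by
      have hxe : M (x n) = x (n + 1) := (Function.iterate_succ_apply' M n ξ).symm
      rw [hxe]
      exact hη1 _ (mem_range_self _)
    exact h1.trans h2
  refine ⟨C, ?_, fun ξ hξ η hη hlt => hη ξ hlt⟩
  intro hcnt
  obtain ⟨b, hb⟩ := exists_ub hcnt
  obtain ⟨η, hη, hbη⟩ := key b
  exact absurd (hb η hη) (not_lt.2 hbη.le)

end OtoczkaAux

/-- If `I` is c.c.c., `𝒜 ⊆ I` is point-finite with `⋃𝒜 ∉ I`, and `P(𝒜)/ℐ` is not c.c.c.,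
then there are `ω₁` many pairwise disjoint subfamilies of `𝒜`, each with `I`-positive
union, all of whose unions have the same `I`-hull `H`. -/
theorem otoczka {X : Type} [TopologicalSpace X] [PolishSpace X] [Uncountable X]
    (I : Set (Set X)) (hI : IsNiceIdeal I) (hccc : IdealCCC I)
    (𝒜 : Set (Set X)) (h𝒜 : 𝒜 ⊆ I) (hpf : PointFiniteFam 𝒜)
    (hU : ⋃₀ 𝒜 ∉ I) (hnc : ¬ AlgCCC I 𝒜) :
    ∃ (F : Omega1 → Set (Set X)) (H : Set X),
      (∀ α, F α ⊆ 𝒜) ∧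
      (∀ α, ⋃₀ (F α) ∉ I) ∧
      (∀ α β, α ≠ β → F α ∩ F β = ∅) ∧
      (∀ α, IsHull I H (⋃₀ (F α))) := by
  classical
  rw [AlgCCC] at hnc
  push_neg at hnc
  obtain ⟨𝒲, hW1sub, hW2, hW3, hW4⟩ := hnc
  -- an ω₁-indexed injective family inside 𝒲
  have hcard : Cardinal.mk OtoczkaAux.W1 ≤ Cardinal.mk (↥𝒲) := by
    rw [OtoczkaAux.W1_mk]
    by_contra h
    exact hW4 ((Cardinal.countable_iff_lt_aleph_one 𝒲).2 (not_le.1 h))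
  obtain ⟨e⟩ := Cardinal.le_def _ _ |>.1 hcard
  set a : OtoczkaAux.W1 → Set (Set X) := fun β => (e β : Set (Set X)) with ha
  have haW : ∀ β, a β ∈ 𝒲 := fun β => (e β).2
  have hainj : Function.Injective a := fun β γ h => by
    have := e.injective (Subtype.ext h)
    exact this
  -- disjointification
  set F' : OtoczkaAux.W1 → Set (Set X) :=
    fun β => a β \ {A | ∃ γ, γ < β ∧ A ∈ a γ} with hF'
  set D : OtoczkaAux.W1 → Set X := fun β => ⋃₀ F' β with hD
  have hane : ∀ {β γ : OtoczkaAux.W1}, γ < β → a β ≠ a γ := by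
    intro β γ hγ hEq
    cases hainj hEq
    exact lt_irrefl _ hγ
  have hDpos : ∀ β, D β ∉ I := by
    intro β hmem
    apply hW2 (a β) (haW β)
    have hsmall : (⋃₀ a β) \ D β ∈ I := by
      refine OtoczkaAux.mono hI ?_ (OtoczkaAux.biUnion_mem hI (OtoczkaAux.Iio_cnt β)
        (f := fun γ => ⋃₀ (a β ∩ a γ))
        (fun γ hγ => hW3 (a β) (haW β) (a γ) (haW γ) (hane hγ)))
      rintro x ⟨⟨A, hA, hxA⟩, hxD⟩
      by_cases hAF : A ∈ F' β
      · exact absurd ⟨A, hAF, hxA⟩ hxD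
      · have hAg : ∃ γ, γ < β ∧ A ∈ a γ := by
          by_contra hno
          exact hAF ⟨hA, hno⟩
        obtain ⟨γ, hγ, hAγ⟩ := hAg
        exact mem_biUnion hγ ⟨A, ⟨hA, hAγ⟩, hxA⟩
    exact OtoczkaAux.mono hI (subset_diff_union _ _) (OtoczkaAux.union_mem hI hsmall hmem)
  -- hulls of the pieces
  choose Hd hHdspec using fun β => OtoczkaAux.hull_exists hI hccc (D β)
  have hHdB : ∀ β, IsBorel (Hd β) := fun β => (hHdspec β).1
  have hHdpos : ∀ β, Hd β ∉ I := fun β => OtoczkaAux.hull_pos hI (hHdspec β) (hDpos β)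
  -- saturated countable subsets of the final segments
  choose T hT1 hT2 hT3 using fun γ : OtoczkaAux.W1 =>
    OtoczkaAux.saturated hI hccc (Ici γ) Hd (fun β _ => hHdB β) (fun β _ => hHdpos β)
  set u : OtoczkaAux.W1 → Set X := fun γ => ⋃ δ ∈ T γ, Hd δ with hu
  have huB : ∀ γ, IsBorel (u γ) :=
    fun γ => OtoczkaAux.isBorel_biUnion (hT2 γ) (fun δ _ => hHdB δ)
  have hmono : ∀ {γ γ' : OtoczkaAux.W1}, γ ≤ γ' → u γ' \ u γ ∈ I := by
    intro γ γ' h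
    refine OtoczkaAux.mono hI ?_ (OtoczkaAux.biUnion_mem hI (hT2 γ')
      (f := fun δ => Hd δ \ u γ)
      (fun δ hδ => hT3 γ δ (mem_Ici.2 (h.trans (mem_Ici.1 (hT1 γ' hδ))))))
    rintro x ⟨hx1, hx2⟩
    simp only [hu, mem_iUnion] at hx1
    obtain ⟨δ, hδ, hxδ⟩ := hx1
    exact mem_biUnion hδ ⟨hxδ, hx2⟩
  -- stabilization of the decreasing chain
  have hstab : ∃ ξ₀ : OtoczkaAux.W1, ∀ γ, ξ₀ ≤ γ → u ξ₀ \ u γ ∈ I := by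
    by_contra hcon
    push_neg at hcon
    choose f hf1 hf2 using hcon
    obtain ⟨Z, hZunc, hZ⟩ := OtoczkaAux.sparse f
    set Bs : OtoczkaAux.W1 → Set X := fun ξ => u ξ \ u (f ξ) with hBs
    have hint : ∀ ξ ∈ Z, ∀ η ∈ Z, ξ ≠ η → Bs ξ ∩ Bs η ∈ I := by
      intro ξ hξ η hη hne
      rcases hne.lt_or_gt with h | h
      · have hfξ : f ξ < η := hZ ξ hξ η hη h
        refine OtoczkaAux.mono hI ?_ (hmono hfξ.le)
        rintro x ⟨⟨_, hx2⟩, ⟨hx3, _⟩⟩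
        exact ⟨hx3, hx2⟩
      · have hfη : f η < ξ := hZ η hη ξ hξ h
        refine OtoczkaAux.mono hI ?_ (hmono hfη.le)
        rintro x ⟨⟨hx1, _⟩, ⟨_, hx4⟩⟩
        exact ⟨hx1, hx4⟩
    have hinj : InjOn Bs Z := by
      intro ξ hξ η hη hEq
      by_contra hne
      have h1 : Bs ξ ∩ Bs η ∈ I := hint ξ hξ η hη hne
      rw [hEq, inter_self] at h1
      exact hf2 η h1
    have hcnt : (Bs '' Z).Countable := by
      refine hccc (Bs '' Z) ?_ ?_
      · rintro A' ⟨ξ, hξ, rfl⟩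
        exact ⟨OtoczkaAux.isBorel_diff (huB ξ) (huB (f ξ)), hf2 ξ⟩
      · rintro A' ⟨ξ, hξ, rfl⟩ B' ⟨η, hη, rfl⟩ hne
        exact hint ξ hξ η hη (fun h => hne (by rw [h]))
    exact hZunc (Set.countable_of_injective_of_countable_image hinj hcnt)
  obtain ⟨ξ₀, hξ₀⟩ := hstab
  -- strict upper bounds for the saturated sets
  have hmζ : ∀ γ : OtoczkaAux.W1, ∃ b, γ < b ∧ ∀ δ ∈ T γ, δ < b := by
    intro γ
    obtain ⟨b, hb, -⟩ := OtoczkaAux.exists_lub ((hT2 γ).insert γ)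
    exact ⟨b, hb γ (mem_insert _ _), fun δ hδ => hb δ (mem_insert_of_mem _ hδ)⟩
  choose m hm1 hm2 using hmζ
  obtain ⟨Z, hZunc, hZ⟩ := OtoczkaAux.sparse m
  set Z' : Set OtoczkaAux.W1 := Z ∩ Ici ξ₀ with hZ'd
  have hZ'unc : ¬ Z'.Countable := by
    intro h
    apply hZunc
    have hsub : Z ⊆ Z' ∪ Iio ξ₀ := by
      intro ζ hζ
      by_cases hge : ξ₀ ≤ ζ
      · exact Or.inl ⟨hζ, hge⟩
      · exact Or.inr (not_le.1 hge)
    exact Countable.mono hsub (h.union (OtoczkaAux.Iio_cnt ξ₀))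
  have hcard2 : Cardinal.mk Omega1 ≤ Cardinal.mk (↥Z') := by
    have h1 : Cardinal.mk Omega1 = Cardinal.aleph 1 := Cardinal.mk_out _
    rw [h1]
    by_contra h
    exact hZ'unc ((Cardinal.countable_iff_lt_aleph_one Z').2 (not_le.1 h))
  obtain ⟨e2⟩ := Cardinal.le_def _ _ |>.1 hcard2
  -- the final families
  set G : OtoczkaAux.W1 → Set (Set X) := fun γ => ⋃ δ ∈ T γ, F' δ with hG
  have hGU : ∀ γ, ⋃₀ G γ = ⋃ δ ∈ T γ, D δ := by
    intro γ
    ext x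
    simp only [hG, mem_sUnion, mem_iUnion, hD]
    constructor
    · rintro ⟨A, hA, hxA⟩
      obtain ⟨δ, hδ, hAδ⟩ := by simpa using hA
      exact ⟨δ, hδ, A, hAδ, hxA⟩
    · rintro ⟨δ, hδ, A, hAδ, hxA⟩
      exact ⟨A, by simpa using ⟨δ, hδ, hAδ⟩, hxA⟩
  have hTne : ∀ γ : OtoczkaAux.W1, (T γ).Nonempty := by
    intro γ
    rcases (T γ).eq_empty_or_nonempty with h | h
    · exfalso
      have h2 := hT3 γ γ (mem_Ici.2 le_rfl)
      rw [h] at h2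
      simp only [mem_empty_iff_false, iUnion_of_empty, iUnion_empty, diff_empty] at h2
      exact hHdpos γ h2
    · exact h
  have hdisjG : ∀ γ ∈ Z', ∀ γ' ∈ Z', γ < γ' → G γ ∩ G γ' = ∅ := by
    intro γ hγ γ' hγ' hlt
    rw [eq_empty_iff_forall_notMem]
    rintro A ⟨hA1, hA2⟩
    obtain ⟨δ, hδ, hAδ⟩ := by simpa [hG] using hA1
    obtain ⟨δ', hδ', hAδ'⟩ := by simpa [hG] using hA2
    have h1 : δ < m γ := hm2 γ δ hδ
    have h2 : m γ < γ' := hZ γ hγ.1 γ' hγ'.1 hlt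
    have h3 : γ' ≤ δ' := mem_Ici.1 (hT1 γ' hδ')
    have h4 : δ < δ' := lt_of_lt_of_le (h1.trans h2) h3
    exact hAδ'.2 ⟨δ, h4, hAδ.1⟩
  refine ⟨fun α => G (e2 α : ↥Z'), u ξ₀, ?_, ?_, ?_, ?_⟩
  · intro α A hA
    obtain ⟨δ, hδ, hAδ⟩ := by simpa [hG] using hA
    exact hW1sub (a δ) (haW δ) hAδ.1
  · intro α hmem
    set γ : OtoczkaAux.W1 := (e2 α).1 with hγdef
    obtain ⟨δ₀, hδ₀⟩ := hTne γ
    apply hDpos δ₀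
    refine OtoczkaAux.mono hI ?_ hmem
    rw [hGU]
    exact subset_biUnion_of_mem (u := fun δ => D δ) hδ₀
  · intro α β hab
    have hne : ((e2 α : ↥Z') : OtoczkaAux.W1) ≠ ((e2 β : ↥Z') : OtoczkaAux.W1) := by
      intro h
      exact hab (e2.injective (Subtype.ext h))
    rcases hne.lt_or_gt with h | h
    · exact hdisjG _ (e2 α).2 _ (e2 β).2 h
    · rw [inter_comm]
      exact hdisjG _ (e2 β).2 _ (e2 α).2 h
  · intro α
    set γ : OtoczkaAux.W1 := (e2 α).1 with hγdef
    have hγZ : γ ∈ Z' := (e2 α).2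
    have hhullγ : IsHull I (u γ) (⋃₀ G γ) := by
      rw [hGU]
      exact OtoczkaAux.hull_biUnion hI (hT2 γ) (fun δ _ => hHdspec δ)
    exact OtoczkaAux.hull_congr hI hhullγ (huB ξ₀) (hmono hγZ.2) (hξ₀ γ hγZ.2)
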